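/- Let L be a finite-dimensional nilpotent Lie algebra over a field 𝔽 with dim L' = 1, L' ⊆ Z(L), and dim L − dim Z(L) ≥ 4 (so L is a Heisenberg Lie algebra up to isoclinism of dimension at least 5). Then there exist commuting automorphisms α and β of L such that the composite α ∘ β is not a commuting automorphism; in particular, the set of commuting automorphisms of L does not form a subgroup of Aut(L). -/

import Mathlib

/-- Let `L` be a finite-dimensional nilpotent Lie algebra over a field `𝔽` with
`dim L' = 1`, `L' ⊆ Z(L)` and `dim L − dim Z(L) ≥ 4` (so `L` is a Heisenberg Lie algebra up to
isoclinism, of dimension at least `5`). Then there exist commuting automorphisms `α` and `β` of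
`L` whose composite `α ∘ β` is not a commuting automorphism; in particular the set of commuting
automorphisms of `L` does not form a subgroup of `Aut(L)`. -/
theorem exists_commuting_auts_comp_not_commuting_of_heisenberg {F L : Type*} [Field F]
    [LieRing L] [LieAlgebra F L] [FiniteDimensional F L] [LieRing.IsNilpotent L]
    (hder : Module.finrank F ↥(LieModule.lowerCentralSeries F L L 1) = 1)
    (hderZ : LieModule.lowerCentralSeries F L L 1 ≤ LieAlgebra.center F L)
    (hcodim : Module.finrank F ↥(LieAlgebra.center F L) + 4 ≤ Module.finrank F L) :
    ∃ α β : L ≃ₗ⁅F⁆ L, (∀ x : L, ⁅α x, x⁆ = 0) ∧ (∀ x : L, ⁅β x, x⁆ = 0) ∧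
      ¬ (∀ x : L, ⁅α (β x), x⁆ = 0) := by
  classical
  obtain ⟨zz, hzz0, hzzspan⟩ := (finrank_eq_one_iff' ).mp hder
  set z : L := (zz : L) with hzdef
  have hzne : z ≠ 0 := fun h => hzz0 (Subtype.ext h)
  have hzD : z ∈ LieModule.lowerCentralSeries F L L 1 := zz.2
  have hspan : ∀ w ∈ LieModule.lowerCentralSeries F L L 1, ∃ c : F, w = c • z := by
    intro w hw
    obtain ⟨c, hc⟩ := hzzspan ⟨w, hw⟩
    exact ⟨c, by rw [show w = ((⟨w, hw⟩ : ↥(LieModule.lowerCentralSeries F L L 1)) : L) from rfl, ← hc]; rfl⟩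
  -- functional g with g z = 1
  obtain ⟨Cq, hCq⟩ := (Submodule.span F {z}).exists_isCompl
  set g : L →ₗ[F] F :=
    (LinearEquiv.toSpanNonzeroSingleton F L z hzne).symm.toLinearMap ∘ₗ
      Submodule.linearProjOfIsCompl _ _ hCq with hgdef
  have hgz : g z = 1 := by
    have h1 : (Submodule.linearProjOfIsCompl _ _ hCq) z
        = ⟨z, Submodule.mem_span_singleton_self z⟩ :=
      Submodule.linearProjOfIsCompl_apply_left hCq ⟨z, Submodule.mem_span_singleton_self z⟩
    have h2 : (LinearEquiv.toSpanNonzeroSingleton F L z hzne) 1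
        = ⟨z, Submodule.mem_span_singleton_self z⟩ :=
      LinearEquiv.toSpanNonzeroSingleton_one F L z hzne
    rw [hgdef]
    simp only [LinearMap.coe_comp, Function.comp_apply, LinearEquiv.coe_coe, h1, ← h2,
      LinearEquiv.symm_apply_apply]
  have hmem : ∀ u v : L, ⁅u, v⁆ ∈ LieModule.lowerCentralSeries F L L 1 := by
    intro u v
    rw [LieModule.lowerCentralSeries_succ]
    exact LieSubmodule.lie_mem_lie (LieSubmodule.mem_top u)
      (by rw [LieModule.lowerCentralSeries_zero]; exact LieSubmodule.mem_top v)
  have hgen : ∀ w ∈ LieModule.lowerCentralSeries F L L 1, w = g w • z := by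
    intro w hw
    obtain ⟨c, hc⟩ := hspan w hw
    rw [hc, map_smul, hgz, smul_eq_mul, mul_one]

  have hb : ∀ u v : L, ⁅u, v⁆ = g ⁅u, v⁆ • z := fun u v => hgen _ (hmem u v)
  set fl : L → L →ₗ[F] F := fun v => g ∘ₗ (LieAlgebra.ad F L v) with hfldef
  have hfl : ∀ u v : L, fl u v = g ⁅u, v⁆ := fun u v => rfl
  have hb' : ∀ u v : L, ⁅u, v⁆ = fl u v • z := hb
  have hskew : ∀ u v : L, fl u v = -(fl v u) := by
    intro u v
    rw [hfl, hfl, ← lie_skew, map_neg]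
  have hself : ∀ u : L, fl u u = 0 := by intro u; rw [hfl, lie_self, map_zero]
  have fl_add : ∀ u v w : L, fl (u + v) w = fl u w + fl v w := by
    intro u v w; rw [hfl, hfl, hfl, add_lie, map_add]
  have fl_sub : ∀ u v w : L, fl (u - v) w = fl u w - fl v w := by
    intro u v w; rw [hfl, hfl, hfl, sub_lie, map_sub]
  have fl_smul : ∀ (c : F) (u w : L), fl (c • u) w = c * fl u w := by
    intro c u w; rw [hfl, hfl, smul_lie, map_smul, smul_eq_mul]
  have hzc : ∀ v : L, ⁅v, z⁆ = 0 := (LieModule.mem_maxTrivSubmodule F L L z).mp (hderZ hzD)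
  have flz : ∀ v : L, fl v z = 0 := by intro v; rw [hfl, hzc, map_zero]
  have hncen : ∀ u : L, u ∉ LieAlgebra.center F L → ∃ v, fl u v ≠ 0 := by
    intro u hu
    by_contra h
    push_neg at h
    exact hu ((LieModule.mem_maxTrivSubmodule F L L u).mpr (fun v => by
      rw [← lie_skew, hb' u v, h v, zero_smul, neg_zero]))
  -- first hyperbolic pair
  have hextop : ∃ x, x ∉ LieAlgebra.center F L := by
    by_contra h
    push_neg at h
    have htop : LieAlgebra.center F L = ⊤ := le_antisymm le_top (fun x _ => h x)
    rw [htop] at hcodim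
    have : Module.finrank F ↥(⊤ : LieIdeal F L) = Module.finrank F L :=
      finrank_top F L
    omega
  obtain ⟨x1, hx1⟩ := hextop
  obtain ⟨y, hy⟩ := hncen x1 hx1
  obtain ⟨y1, G1⟩ : ∃ y1, fl x1 y1 = 1 :=
    ⟨(fl x1 y)⁻¹ • y, by rw [map_smul, smul_eq_mul, inv_mul_cancel₀ hy]⟩
  -- second hyperbolic pair
  set φ : L →ₗ[F] F × F := (fl x1).prod (fl y1) with hφdef
  have hker : Module.finrank F L ≤ 2 + Module.finrank F ↥(LinearMap.ker φ) := by
    have h1 := LinearMap.finrank_range_add_finrank_ker φ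
    have h2 : Module.finrank F ↥(LinearMap.range φ) ≤ 2 := by
      have := Submodule.finrank_le (LinearMap.range φ)
      have hFF : Module.finrank F (F × F) = 2 := by
        rw [Module.finrank_prod, Module.finrank_self]
      omega
    omega
  have hnle : ¬ (LinearMap.ker φ ≤ (LieAlgebra.center F L : Submodule F L)) := by
    intro hle
    have h3 := Submodule.finrank_mono hle
    have h4 : Module.finrank F ↥(LieAlgebra.center F L : Submodule F L)
        = Module.finrank F ↥(LieAlgebra.center F L) := rfl
    omega
  obtain ⟨x2, hx2k, hx2Z⟩ := SetLike.not_le_iff_exists.mp hnle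
  rw [LinearMap.mem_ker] at hx2k
  have Gc : fl x1 x2 = 0 := congrArg Prod.fst hx2k
  have Ge : fl y1 x2 = 0 := congrArg Prod.snd hx2k
  clear hx2k hnle hker hφdef
  have hx2Z' : x2 ∉ LieAlgebra.center F L := hx2Z
  obtain ⟨w, hw⟩ := hncen x2 hx2Z'
  have e1 : fl x2 x1 = 0 := by rw [hskew, Gc, neg_zero]
  have e2 : fl x2 y1 = 0 := by rw [hskew, Ge, neg_zero]
  obtain ⟨y2, G2, Gd, Gf⟩ : ∃ y2, fl x2 y2 = 1 ∧ fl x1 y2 = 0 ∧ fl y1 y2 = 0 := by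
    have hx2w' : fl x2 (w - fl w y1 • x1 + fl w x1 • y1) = fl x2 w := by
      simp only [map_add, map_sub, map_smul, smul_eq_mul, e1, e2]
      ring
    refine ⟨(fl x2 w)⁻¹ • (w - fl w y1 • x1 + fl w x1 • y1), ?_, ?_, ?_⟩
    · rw [map_smul, smul_eq_mul, hx2w', inv_mul_cancel₀ hw]
    · rw [map_smul, smul_eq_mul]
      simp only [map_add, map_sub, map_smul, smul_eq_mul, hself, G1, hskew w x1]
      ring
    · rw [map_smul, smul_eq_mul]
      have e3 : fl y1 x1 = -1 := by rw [hskew, G1]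
      simp only [map_add, map_sub, map_smul, smul_eq_mul, hself, e3, hskew w y1]
      ring

  have r1 : fl y1 x1 = -1 := by rw [hskew, G1]
  have r2 : fl y2 x2 = -1 := by rw [hskew, G2]
  have r3 : fl y2 x1 = 0 := by rw [hskew, Gd, neg_zero]
  have r4 : fl y2 y1 = 0 := by rw [hskew, Gf, neg_zero]
  -- the two automorphisms as linear maps
  set A : L →ₗ[F] L := LinearMap.id + (fl y2 - fl y1).smulRight (x2 - x1)
      + (fl x1 - fl x2).smulRight (y2 - y1) with hAdef
  set B : L →ₗ[F] L := LinearMap.id + (-(fl y1) - fl x2).smulRight (y2 - x1)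
      + (fl y2 - fl x1).smulRight (x2 + y1) with hBdef
  have hA : ∀ x : L, A x = x + (fl y2 x - fl y1 x) • (x2 - x1)
      + (fl x1 x - fl x2 x) • (y2 - y1) := fun x => rfl
  have hB : ∀ x : L, B x = x + (-(fl y1 x) - fl x2 x) • (y2 - x1)
      + (fl y2 x - fl x1 x) • (x2 + y1) := fun x => rfl
  have hApres : ∀ u v : L, fl (A u) (A v) = fl u v := by
    intro u v
    rw [hA u, hA v]
    simp only [fl_add, fl_sub, fl_smul, map_add, map_sub, map_smul, smul_eq_mul,
      G1, G2, Gc, Gd, Ge, Gf, e1, e2, r1, r2, r3, r4, hself,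
      hskew u x1, hskew u x2, hskew u y1, hskew u y2]
    ring
  have hBpres : ∀ u v : L, fl (B u) (B v) = fl u v := by
    intro u v
    rw [hB u, hB v]
    simp only [fl_add, fl_sub, fl_smul, map_add, map_sub, map_smul, smul_eq_mul,
      G1, G2, Gc, Gd, Ge, Gf, e1, e2, r1, r2, r3, r4, hself,
      hskew u x1, hskew u x2, hskew u y1, hskew u y2]
    ring
  have hAfix : ∀ m ∈ LieModule.lowerCentralSeries F L L 1, A m = m := by
    intro m hm
    obtain ⟨c, hc⟩ := hspan m hm
    rw [hc, hA]
    simp only [map_smul, flz, smul_eq_mul, mul_zero, smul_zero, sub_zero, zero_smul,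
      sub_self, add_zero]
  have hBfix : ∀ m ∈ LieModule.lowerCentralSeries F L L 1, B m = m := by
    intro m hm
    obtain ⟨c, hc⟩ := hspan m hm
    rw [hc, hB]
    simp only [map_smul, flz, smul_eq_mul, mul_zero, smul_zero, sub_zero, zero_smul,
      sub_self, add_zero, neg_zero, zero_sub, zero_add]
  have hAA : ∀ x : L, A (A x) = x := by
    intro x
    rw [hA (A x), hA x]
    simp only [map_add, map_sub, map_smul, smul_eq_mul,
      G1, G2, Gc, Gd, Ge, Gf, e1, e2, r1, r2, r3, r4, hself]
    match_scalars <;> ring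
  have hBB : ∀ x : L, B (B x) = x := by
    intro x
    rw [hB (B x), hB x]
    simp only [map_add, map_sub, map_smul, map_neg, smul_eq_mul,
      G1, G2, Gc, Gd, Ge, Gf, e1, e2, r1, r2, r3, r4, hself]
    match_scalars <;> ring
  have hAcomm : ∀ x : L, ⁅A x, x⁆ = 0 := by
    intro x
    rw [hb' (A x) x]
    have h0 : fl (A x) x = 0 := by
      rw [hA x]
      simp only [fl_add, fl_sub, fl_smul, hself]
      ring
    rw [h0, zero_smul]
  have hBcomm : ∀ x : L, ⁅B x, x⁆ = 0 := by
    intro x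
    rw [hb' (B x) x]
    have h0 : fl (B x) x = 0 := by
      rw [hB x]
      simp only [fl_add, fl_sub, fl_smul, hself]
      ring
    rw [h0, zero_smul]
  have hAlie : ∀ x y : L, A ⁅x, y⁆ = ⁅A x, A y⁆ := by
    intro x y
    rw [hAfix _ (hmem x y), hb' x y, hb' (A x) (A y), hApres]
  have hBlie : ∀ x y : L, B ⁅x, y⁆ = ⁅B x, B y⁆ := by
    intro x y
    rw [hBfix _ (hmem x y), hb' x y, hb' (B x) (B y), hBpres]
  -- the Lie algebra automorphisms
  refine ⟨{ toLinearMap := A, map_lie' := fun {x y} => hAlie x y, invFun := A,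
            left_inv := hAA, right_inv := hAA },
          { toLinearMap := B, map_lie' := fun {x y} => hBlie x y, invFun := B,
            left_inv := hBB, right_inv := hBB }, ?_, ?_, ?_⟩
  · exact hAcomm
  · exact hBcomm
  · intro hcon
    have hBx1 : B x1 = y2 := by
      rw [hB x1]
      simp only [r1, e1, r3, hself]
      match_scalars <;> ring
    have hAy2 : A y2 = y1 := by
      rw [hA y2]
      simp only [Gd, Gf, G2, hself]
      match_scalars <;> ring
    have hzero : (⁅A (B x1), x1⁆ : L) = 0 := hcon x1
    rw [hBx1, hAy2, hb' y1 x1, r1] at hzero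
    exact hzne (by simpa using hzero)
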